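/- Fix d ≥ 1. Let P be a Borel probability measure on ℝ^d with density p with respect to Lebesgue measure, let Z_1, Z_2, … be i.i.d. with law P, and let y ∈ ℝ^d be a point at which p is continuous and p(y) > 0. Then for every t ≥ 0, the probability P( n^{2/d} · min_{1≤j≤n} ‖y − Z_j‖² > t ) converges, as n → ∞, to exp(−p(y) · V_d · t^{d/2}). -/

import Mathlib

open MeasureTheory Filter

lemma aux_pow_tendsto_exp (a : ℕ → ℝ) (c : ℝ)
    (hc : Filter.Tendsto (fun n : ℕ => (n : ℝ) * a n) atTop (nhds c)) :
    Filter.Tendsto (fun n : ℕ => (1 - a n) ^ n) atTop (nhds (Real.exp (-c))) := by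
  have ha0 : Tendsto a atTop (nhds 0) := by
    have h2 : Tendsto (fun n : ℕ => ((n : ℝ) * a n) * (1 / (n : ℝ))) atTop (nhds (c * 0)) :=
      hc.mul tendsto_one_div_atTop_nhds_zero_nat
    rw [mul_zero] at h2
    apply h2.congr'
    filter_upwards [eventually_ge_atTop 1] with n hn
    have : (n : ℝ) ≠ 0 := by positivity
    field_simp
  have hev : ∀ᶠ n : ℕ in atTop, a n ≤ 1 / 2 :=
    ha0.eventually_le_const (by norm_num)
  have hlog : Tendsto (fun n : ℕ => (n : ℝ) * Real.log (1 - a n)) atTop (nhds (-c)) := by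
    have hlo : Tendsto (fun n : ℕ => -(((n : ℝ) * a n) / (1 - a n))) atTop
        (nhds (-(c / (1 - 0)))) :=
      (hc.div (tendsto_const_nhds.sub ha0) (by norm_num)).neg
    rw [sub_zero, div_one] at hlo
    refine tendsto_of_tendsto_of_tendsto_of_le_of_le' hlo hc.neg ?_ ?_
    · filter_upwards [hev] with n hn
      have h1 : (0:ℝ) < 1 - a n := by linarith
      have key : -(a n / (1 - a n)) ≤ Real.log (1 - a n) := by
        have h2 : Real.log (1 - a n)⁻¹ ≤ (1 - a n)⁻¹ - 1 :=
          Real.log_le_sub_one_of_pos (by positivity)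
        rw [Real.log_inv] at h2
        have h3 : (1 - a n)⁻¹ - 1 = a n / (1 - a n) := by field_simp; ring
        rw [h3] at h2; linarith
      calc -((n : ℝ) * a n / (1 - a n)) = (n : ℝ) * -(a n / (1 - a n)) := by ring
        _ ≤ (n : ℝ) * Real.log (1 - a n) :=
          mul_le_mul_of_nonneg_left key (Nat.cast_nonneg n)
    · filter_upwards [hev] with n hn
      have h1 : (0:ℝ) < 1 - a n := by linarith
      have key : Real.log (1 - a n) ≤ -(a n) := by
        have := Real.log_le_sub_one_of_pos h1
        linarith
      calc (n : ℝ) * Real.log (1 - a n) ≤ (n : ℝ) * -(a n) :=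
          mul_le_mul_of_nonneg_left key (Nat.cast_nonneg n)
        _ = -((n:ℝ) * a n) := by ring
  have hcomp := (Real.continuous_exp.tendsto _).comp hlog
  apply hcomp.congr'
  filter_upwards [hev] with n hn
  have h1 : (0:ℝ) < 1 - a n := by linarith
  simp only [Function.comp_apply]
  rw [Real.exp_nat_mul, Real.exp_log h1]

/-- `V_d = π^{d/2} / Γ(d/2 + 1)`, the volume of the Euclidean unit ball in `ℝ^d`. -/
noncomputable def ballVol (d : ℕ) : ℝ :=
  Real.pi ^ ((d : ℝ) / 2) / Real.Gamma ((d : ℝ) / 2 + 1)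

/-- **Limiting tail distribution of the rescaled nearest-neighbor squared distance.**
Let `P = p · Leb` on `ℝ^d`, let `Z_1, Z_2, …` be i.i.d. with law `P`, and let `y` be a
point where `p` is continuous and positive. Then for every `t ≥ 0`,
`P(n^{2/d} min_{1≤j≤n} ‖y − Z_j‖² > t) → exp(−p(y) V_d t^{d/2})` as `n → ∞`. -/
theorem stmt_8 (d : ℕ) (hd : 1 ≤ d)
    (p : EuclideanSpace ℝ (Fin d) → ℝ) (hp : 0 ≤ p)
    (P : Measure (EuclideanSpace ℝ (Fin d)))
    (hP : P = volume.withDensity fun y => ENNReal.ofReal (p y))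
    [IsProbabilityMeasure P]
    {Θ : Type*} [MeasurableSpace Θ] (Pr : Measure Θ) [IsProbabilityMeasure Pr]
    (Z : ℕ → Θ → EuclideanSpace ℝ (Fin d))
    (hZmeas : ∀ i, Measurable (Z i))
    (hZlaw : ∀ i, Measure.map (Z i) Pr = P)
    (hZindep : ProbabilityTheory.iIndepFun Z Pr)
    (y : EuclideanSpace ℝ (Fin d)) (hcont : ContinuousAt p y) (hpos : 0 < p y)
    (t : ℝ) (ht : 0 ≤ t) :
    Filter.Tendsto
      (fun n : ℕ =>
        Pr {θ | t < (n : ℝ) ^ ((2 : ℝ) / d) * ⨅ j : Fin n, ‖y - Z j θ‖ ^ 2})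
      Filter.atTop
      (nhds (ENNReal.ofReal (Real.exp (-(p y * ballVol d * t ^ ((d : ℝ) / 2)))))) := by
  haveI : Nonempty (Fin d) := ⟨⟨0, hd⟩⟩
  have hd0 : (d : ℝ) ≠ 0 := by positivity
  set r : ℕ → ℝ := fun n => Real.sqrt (t / (n : ℝ) ^ ((2 : ℝ) / d)) with hr
  set a : ℕ → ℝ := fun n => (P (Metric.closedBall y (r n))).toReal with ha
  have ha0 : ∀ n, 0 ≤ a n := fun n => ENNReal.toReal_nonneg
  have ha1 : ∀ n, a n ≤ 1 := by
    intro n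
    have := prob_le_one (μ := P) (s := Metric.closedBall y (r n))
    have h2 := ENNReal.toReal_mono ENNReal.one_ne_top this
    simpa using h2
  have hballVol_eq : Real.sqrt Real.pi ^ d / Real.Gamma (d / 2 + 1) = ballVol d := by
    unfold ballVol
    congr 1
    rw [Real.sqrt_eq_rpow, ← Real.rpow_natCast (Real.pi ^ (1 / (2:ℝ))) d,
      ← Real.rpow_mul Real.pi_pos.le]
    congr 1
    ring
  have hGamma_pos : 0 < Real.Gamma ((d : ℝ) / 2 + 1) := by
    apply Real.Gamma_pos_of_pos; positivity
  -- Step V : the exact volume identity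
  have hvol : ∀ n : ℕ, 1 ≤ n →
      (n : ℝ) * (volume (Metric.closedBall y (r n))).toReal
        = ballVol d * t ^ ((d : ℝ) / 2) := by
    intro n hn
    have hn0 : (0:ℝ) < (n : ℝ) := by exact_mod_cast hn
    have hC : (0:ℝ) < (n : ℝ) ^ ((2 : ℝ) / d) := Real.rpow_pos_of_pos hn0 _
    rw [EuclideanSpace.volume_closedBall]
    rw [ENNReal.toReal_mul, ENNReal.toReal_pow, ENNReal.toReal_ofReal (Real.sqrt_nonneg _),
      ENNReal.toReal_ofReal (by positivity)]
    simp only [Fintype.card_fin]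
    have hrn : r n ^ d = t ^ ((d:ℝ)/2) / (n : ℝ) := by
      show Real.sqrt (t / (n : ℝ) ^ ((2:ℝ)/d)) ^ d = _
      rw [Real.sqrt_eq_rpow, ← Real.rpow_natCast (_ ^ (1/(2:ℝ))) d,
        ← Real.rpow_mul (by positivity)]
      rw [Real.div_rpow ht (by positivity)]
      rw [← Real.rpow_mul hn0.le]
      have e1 : (1/(2:ℝ)) * (d:ℝ) = (d:ℝ)/2 := by ring
      rw [e1]
      have e2 : (2:ℝ)/(d:ℝ) * ((d:ℝ)/2) = 1 := by field_simp
      rw [e2, Real.rpow_one]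
    rw [hrn, hballVol_eq]
    field_simp
  -- Step B : tendsto of n * a n
  have hK0 : 0 ≤ ballVol d * t ^ ((d : ℝ) / 2) := by
    have : 0 ≤ ballVol d := by
      unfold ballVol
      positivity
    have h2 : (0:ℝ) ≤ t ^ ((d : ℝ) / 2) := Real.rpow_nonneg ht _
    positivity
  set K := ballVol d * t ^ ((d : ℝ) / 2) with hKdef
  have hr0 : Tendsto r atTop (nhds 0) := by
    have hc_top : Tendsto (fun n : ℕ => (n : ℝ) ^ ((2 : ℝ) / d)) atTop atTop :=
      (tendsto_rpow_atTop (by positivity)).comp tendsto_natCast_atTop_atTop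
    have hdiv : Tendsto (fun n : ℕ => t / (n : ℝ) ^ ((2 : ℝ) / d)) atTop (nhds 0) :=
      Tendsto.div_atTop tendsto_const_nhds hc_top
    have := (Real.continuous_sqrt.tendsto 0).comp hdiv
    rwa [Real.sqrt_zero] at this
  have hna : Tendsto (fun n : ℕ => (n : ℝ) * a n) atTop (nhds (p y * K)) := by
    rw [Metric.tendsto_atTop]
    intro ε' hε'
    set ε := min (ε' / (2 * (K + 1))) (p y / 2) with hεdef
    have hεpos : 0 < ε := by
      apply lt_min
      · positivity
      · positivity
    have hεK : ε * K ≤ ε' / 2 := by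
      calc ε * K ≤ (ε' / (2 * (K + 1))) * (K + 1) := by
            apply mul_le_mul (min_le_left _ _) (by linarith) hK0 (by positivity)
        _ = ε' / 2 := by field_simp
    have hεp : ε ≤ p y / 2 := min_le_right _ _
    -- continuity
    rw [Metric.continuousAt_iff] at hcont
    obtain ⟨δ, hδpos, hδ⟩ := hcont ε hεpos
    obtain ⟨N1, hN1⟩ := (hr0.eventually (eventually_lt_nhds hδpos)).exists_forall_of_atTop
    refine ⟨max N1 1, fun n hn => ?_⟩
    have hn1 : 1 ≤ n := le_trans (le_max_right _ _) hn
    have hrδ : r n < δ := hN1 n (le_trans (le_max_left _ _) hn)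
    have hn0 : (0:ℝ) < (n : ℝ) := by exact_mod_cast hn1
    set cb := Metric.closedBall y (r n) with hcb
    have hbound : ∀ x ∈ cb, |p x - p y| < ε := by
      intro x hx
      have hdist : dist x y < δ := lt_of_le_of_lt (Metric.mem_closedBall.mp hx) hrδ
      have := hδ hdist
      rwa [Real.dist_eq] at this
    have hPcb : P cb = ∫⁻ x in cb, ENNReal.ofReal (p x) ∂volume := by
      rw [hP, withDensity_apply _ measurableSet_closedBall]
    set v := (volume cb).toReal with hv
    have hvfin : volume cb ≠ ⊤ := measure_closedBall_lt_top.ne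
    have hupper : a n ≤ (p y + ε) * v := by
      have hle : P cb ≤ ENNReal.ofReal (p y + ε) * volume cb := by
        rw [hPcb]
        calc ∫⁻ x in cb, ENNReal.ofReal (p x) ∂volume
            ≤ ∫⁻ _ in cb, ENNReal.ofReal (p y + ε) ∂volume := by
              apply setLIntegral_mono measurable_const
              intro x hx
              apply ENNReal.ofReal_le_ofReal
              have := hbound x hx
              have := abs_lt.mp this
              linarith [this.2]
          _ = ENNReal.ofReal (p y + ε) * volume cb := setLIntegral_const _ _
      have h2 := ENNReal.toReal_mono (by
        exact ENNReal.mul_ne_top ENNReal.ofReal_ne_top hvfin) hle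
      rwa [ENNReal.toReal_mul, ENNReal.toReal_ofReal (by positivity)] at h2
    have hlower : (p y - ε) * v ≤ a n := by
      have hle : ENNReal.ofReal (p y - ε) * volume cb ≤ P cb := by
        rw [hPcb]
        calc ENNReal.ofReal (p y - ε) * volume cb
            = ∫⁻ _ in cb, ENNReal.ofReal (p y - ε) ∂volume := (setLIntegral_const _ _).symm
          _ ≤ ∫⁻ x in cb, ENNReal.ofReal (p x) ∂volume := by
              apply setLIntegral_mono' measurableSet_closedBall
              intro x hx
              apply ENNReal.ofReal_le_ofReal
              have := abs_lt.mp (hbound x hx)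
              linarith [this.1]
      have h2 := ENNReal.toReal_mono (measure_ne_top P cb) hle
      rwa [ENNReal.toReal_mul, ENNReal.toReal_ofReal (by linarith)] at h2
    have hnv : (n : ℝ) * v = K := hvol n hn1
    have hup2 : (n : ℝ) * a n ≤ p y * K + ε * K := by
      calc (n : ℝ) * a n ≤ (n : ℝ) * ((p y + ε) * v) :=
            mul_le_mul_of_nonneg_left hupper hn0.le
        _ = (p y + ε) * ((n:ℝ) * v) := by ring
        _ = p y * K + ε * K := by rw [hnv]; ring
    have hlo2 : p y * K - ε * K ≤ (n : ℝ) * a n := by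
      calc p y * K - ε * K = (p y - ε) * ((n:ℝ) * v) := by rw [hnv]; ring
        _ = (n : ℝ) * ((p y - ε) * v) := by ring
        _ ≤ (n : ℝ) * a n := mul_le_mul_of_nonneg_left hlower hn0.le
    rw [Real.dist_eq, abs_lt]
    constructor <;> linarith
  -- main event rewrite and product formula
  have hSmeas : ∀ n, MeasurableSet ((Metric.closedBall y (r n))ᶜ) :=
    fun n => measurableSet_closedBall.compl
  have hmain : ∀ n : ℕ, 1 ≤ n →
      Pr {θ | t < (n : ℝ) ^ ((2 : ℝ) / d) * ⨅ j : Fin n, ‖y - Z j θ‖ ^ 2}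
        = ENNReal.ofReal ((1 - a n) ^ n) := by
    intro n hn
    have hn0 : (0:ℝ) < (n : ℝ) := by exact_mod_cast hn
    have hC : (0:ℝ) < (n : ℝ) ^ ((2 : ℝ) / d) := Real.rpow_pos_of_pos hn0 _
    haveI : Nonempty (Fin n) := ⟨⟨0, hn⟩⟩
    set C := (n : ℝ) ^ ((2 : ℝ) / d) with hCdef
    set S := (Metric.closedBall y (r n))ᶜ with hSdef
    have hpt : ∀ x : EuclideanSpace ℝ (Fin d), (r n < ‖y - x‖ ↔ t < C * ‖y - x‖ ^ 2) := by
      intro x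
      have hx : (0:ℝ) ≤ ‖y - x‖ := norm_nonneg _
      have h1 : Real.sqrt (t / C) < Real.sqrt (‖y - x‖ ^ 2) ↔ t / C < ‖y - x‖ ^ 2 :=
        Real.sqrt_lt_sqrt_iff (by positivity)
      rw [Real.sqrt_sq hx] at h1
      rw [show r n = Real.sqrt (t / C) from rfl, h1, div_lt_iff₀ hC, mul_comm]
    have hset : {θ | t < C * ⨅ j : Fin n, ‖y - Z j θ‖ ^ 2}
        = ⋂ i ∈ Finset.range n, Z i ⁻¹' S := by
      ext θ
      simp only [Set.mem_setOf_eq, Set.mem_iInter, Set.mem_preimage, Finset.mem_range,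
        hSdef, Set.mem_compl_iff, Metric.mem_closedBall, not_le]
      constructor
      · intro h i hi
        have hle := ciInf_le (f := fun j : Fin n => ‖y - Z (j : ℕ) θ‖ ^ 2)
          (Set.Finite.bddBelow (Set.finite_range _)) (⟨i, hi⟩ : Fin n)
        have h2 := lt_of_lt_of_le h (mul_le_mul_of_nonneg_left hle hC.le)
        rw [dist_comm, dist_eq_norm]
        exact (hpt (Z i θ)).mpr h2
      · intro h
        obtain ⟨j0, hj0⟩ := exists_eq_ciInf_of_finite (f := fun j : Fin n => ‖y - Z (j : ℕ) θ‖ ^ 2)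
        rw [← hj0]
        have h2 := h j0 j0.isLt
        rw [dist_comm, dist_eq_norm] at h2
        exact (hpt (Z (j0 : ℕ) θ)).mp h2
    rw [hset]
    rw [hZindep.meas_biInter (fun i _ => ⟨S, hSmeas n, rfl⟩)]
    have hPS : ∀ i : ℕ, Pr (Z i ⁻¹' S) = 1 - P (Metric.closedBall y (r n)) := by
      intro i
      rw [← Measure.map_apply (hZmeas i) (hSmeas n), hZlaw i,
        prob_compl_eq_one_sub measurableSet_closedBall]
    simp_rw [hPS]
    rw [Finset.prod_const, Finset.card_range]
    have hP1 : P (Metric.closedBall y (r n)) = ENNReal.ofReal (a n) :=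
      (ENNReal.ofReal_toReal (measure_ne_top P _)).symm
    rw [hP1, ← ENNReal.ofReal_one, ← ENNReal.ofReal_sub _ (ha0 n),
      ENNReal.ofReal_pow (by linarith [ha1 n])]
  have hreal : Tendsto (fun n : ℕ => (1 - a n) ^ n) atTop
      (nhds (Real.exp (-(p y * ballVol d * t ^ ((d:ℝ)/2))))) := by
    have h3 := aux_pow_tendsto_exp a (p y * K) hna
    rw [hKdef, ← mul_assoc] at h3
    exact h3
  have hfin := ENNReal.tendsto_ofReal hreal
  apply hfin.congr'
  filter_upwards [eventually_ge_atTop 1] with n hn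
  exact (hmain n hn).symm
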